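/- For every positive rational number α (regarded as a real scalar), the relative (intrinsic) interior of α·P_{F(I)} equals F(C) ∩ interior(α·P_J); that is, relint(α P_{F(I)}) = F(C) ∩ relint(α P_J). -/

import Mathlib

open Pointwise

/-- The real vector in `ℝ^d` obtained from an integer lattice point. -/
def castR {d : ℕ} (v : Fin d → ℤ) : Fin d → ℝ := fun i => (v i : ℝ)

/-- The cone `C = {p ∈ ℝ^d : F_σ(p) ≥ 0 for all σ ∈ ℱ}`. -/
def coneC {d : ℕ} {ℱ : Type} (Fσ : ℱ → ((Fin d → ℝ) →ₗ[ℝ] ℝ)) : Set (Fin d → ℝ) :=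
  {p | ∀ σ, 0 ≤ Fσ σ p}

/-- The linear map `F : ℝ^d → ℝ^ℱ`, `F(p) = (F_σ(p))_σ`. -/
noncomputable def Fmap {d : ℕ} {ℱ : Type} (Fσ : ℱ → ((Fin d → ℝ) →ₗ[ℝ] ℝ)) :
    (Fin d → ℝ) →ₗ[ℝ] (ℱ → ℝ) :=
  LinearMap.pi Fσ

/-- The nonnegative orthant `ℝ_{≥0}^ℱ`. -/
def orthant (ℱ : Type) : Set (ℱ → ℝ) := {x | ∀ σ, 0 ≤ x σ}

/-- The Newton polyhedron `P_I = conv(⋃ᵢ (βᵢ + C)) ⊆ ℝ^d`. -/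
noncomputable def newtonPI {d r : ℕ} {ℱ : Type} (Fσ : ℱ → ((Fin d → ℝ) →ₗ[ℝ] ℝ))
    (β : Fin r → (Fin d → ℤ)) : Set (Fin d → ℝ) :=
  convexHull ℝ (⋃ i, castR (β i) +ᵥ coneC Fσ)

/-- The Newton polyhedron `P_{F(I)} = conv(⋃ᵢ (F(βᵢ) + F(C))) ⊆ ℝ^ℱ`. -/
noncomputable def newtonPFI {d r : ℕ} {ℱ : Type} (Fσ : ℱ → ((Fin d → ℝ) →ₗ[ℝ] ℝ))
    (β : Fin r → (Fin d → ℤ)) : Set (ℱ → ℝ) :=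
  convexHull ℝ (⋃ i, Fmap Fσ (castR (β i)) +ᵥ (Fmap Fσ '' coneC Fσ))

/-- The Newton polyhedron `P_J = conv(⋃ᵢ (F(βᵢ) + ℝ_{≥0}^ℱ)) ⊆ ℝ^ℱ`. -/
noncomputable def newtonPJ {d r : ℕ} {ℱ : Type} (Fσ : ℱ → ((Fin d → ℝ) →ₗ[ℝ] ℝ))
    (β : Fin r → (Fin d → ℤ)) : Set (ℱ → ℝ) :=
  convexHull ℝ (⋃ i, Fmap Fσ (castR (β i)) +ᵥ orthant ℱ)

lemma small_mul_lt {ε n : ℝ} (hε : 0 < ε) (hn : 0 ≤ n) : ε / (2 * (n + 1)) * n < ε := by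
  rw [div_mul_eq_mul_div, div_lt_iff₀ (by positivity)]
  nlinarith

lemma iUnion_vadd_eq_range_add {E : Type*} [AddCommGroup E] {ι : Type*} (a : ι → E)
    (K : Set E) : (⋃ i, a i +ᵥ K) = Set.range a + K := by
  ext x
  simp only [Set.mem_iUnion, Set.mem_vadd_set, Set.mem_add, Set.mem_range, vadd_eq_add]
  constructor
  · rintro ⟨i, y, hy, rfl⟩; exact ⟨a i, ⟨i, rfl⟩, y, hy, rfl⟩
  · rintro ⟨_, ⟨i, rfl⟩, y, hy, rfl⟩; exact ⟨i, y, hy, rfl⟩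

lemma convexHull_iUnion_vadd {E : Type*} [AddCommGroup E] [Module ℝ E] {ι : Type*}
    (a : ι → E) (K : Set E) (hK : Convex ℝ K) :
    convexHull ℝ (⋃ i, a i +ᵥ K) = convexHull ℝ (Set.range a) + K := by
  rw [iUnion_vadd_eq_range_add, convexHull_add, hK.convexHull_eq]

lemma relint_inter_subspace {E : Type*} [NormedAddCommGroup E] [NormedSpace ℝ E]
    (V : Submodule ℝ E) (Q : Set E) (hQ : Convex ℝ Q)
    (x₀ : E) (hx₀V : x₀ ∈ V) (hx₀Q : x₀ ∈ interior Q) :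
    intrinsicInterior ℝ ((V : Set E) ∩ Q) = (V : Set E) ∩ interior Q := by
  set S : Set E := (V : Set E) ∩ Q with hS
  have hx₀S : x₀ ∈ S := ⟨hx₀V, interior_subset hx₀Q⟩
  have hspan : ((affineSpan ℝ S : AffineSubspace ℝ E) : Set E) = (V : Set E) := by
    apply Set.Subset.antisymm
    · have h1 : affineSpan ℝ S ≤ V.toAffineSubspace := by
        rw [affineSpan_le]
        intro x hx
        exact Submodule.mem_toAffineSubspace.2 hx.1
      intro x hx
      exact Submodule.mem_toAffineSubspace.1 (h1 hx)
    · intro v hv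
      obtain ⟨ε, hε, hball⟩ := Metric.isOpen_iff.1 isOpen_interior x₀ hx₀Q
      set δ : ℝ := ε / (2 * (‖v - x₀‖ + 1)) with hδdef
      have hδ : 0 < δ := by positivity
      set w : E := x₀ + δ • (v - x₀) with hw
      have hwQ : w ∈ interior Q := by
        apply hball
        rw [Metric.mem_ball, dist_eq_norm]
        have h1 : w - x₀ = δ • (v - x₀) := by rw [hw]; abel
        rw [h1, norm_smul, Real.norm_of_nonneg hδ.le]
        exact small_mul_lt hε (norm_nonneg _)
      have hwV : w ∈ V := V.add_mem hx₀V (V.smul_mem _ (V.sub_mem hv hx₀V))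
      have hwS : w ∈ affineSpan ℝ S := subset_affineSpan ℝ S ⟨hwV, interior_subset hwQ⟩
      have hx₀A : x₀ ∈ affineSpan ℝ S := subset_affineSpan ℝ S hx₀S
      have key := AffineSubspace.smul_vsub_vadd_mem (affineSpan ℝ S) δ⁻¹ hwS hx₀A hx₀A
      have hv' : δ⁻¹ • (w -ᵥ x₀) +ᵥ x₀ = v := by
        rw [vsub_eq_sub, vadd_eq_add, hw]
        rw [add_sub_cancel_left, smul_smul, inv_mul_cancel₀ hδ.ne', one_smul]
        abel
      rwa [hv'] at key
  ext x
  rw [mem_intrinsicInterior]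
  constructor
  · rintro ⟨y, hy, rfl⟩
    have hyV : (y : E) ∈ V := by
      have := y.2
      rw [← AffineSubspace.mem_coe, hspan] at this
      exact this
    refine ⟨hyV, ?_⟩
    obtain ⟨ε, hε, hball⟩ := Metric.mem_nhds_iff.1 (mem_interior_iff_mem_nhds.1 hy)
    by_cases hxy : (y : E) = x₀
    · rw [hxy]; exact hx₀Q
    set t : ℝ := ε / (2 * (‖(y : E) - x₀‖ + 1)) with ht
    have htpos : 0 < t := by positivity
    set z : E := (y : E) + t • ((y : E) - x₀) with hz
    have hzV : z ∈ V := V.add_mem hyV (V.smul_mem _ (V.sub_mem hyV hx₀V))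
    have hzA : z ∈ affineSpan ℝ S := by
      rw [← AffineSubspace.mem_coe, hspan]; exact hzV
    have hzball : (⟨z, hzA⟩ : affineSpan ℝ S) ∈ Metric.ball y ε := by
      rw [Metric.mem_ball, Subtype.dist_eq, dist_eq_norm]
      have h1 : z - (y : E) = t • ((y : E) - x₀) := by rw [hz]; abel
      rw [h1, norm_smul, Real.norm_of_nonneg htpos.le]
      exact small_mul_lt hε (norm_nonneg _)
    have hzQ : z ∈ Q := (hball hzball).2
    have h1t : (0:ℝ) < 1 + t := by positivity
    have key := hQ.combo_interior_self_mem_interior hx₀Q hzQ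
      (a := t / (1 + t)) (b := 1 / (1 + t)) (by positivity) (by positivity)
      (by field_simp; ring)
    have heq : (t / (1 + t)) • x₀ + (1 / (1 + t)) • z = (y : E) := by
      rw [hz]
      match_scalars <;> (field_simp; try ring)
    rwa [heq] at key
  · rintro ⟨hxV, hxQ⟩
    have hxA : x ∈ affineSpan ℝ S := subset_affineSpan ℝ S ⟨hxV, interior_subset hxQ⟩
    refine ⟨⟨x, hxA⟩, ?_, rfl⟩
    have hopen : IsOpen ((↑) ⁻¹' interior Q : Set (affineSpan ℝ S)) :=
      isOpen_interior.preimage continuous_subtype_val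
    have hsub : ((↑) ⁻¹' interior Q : Set (affineSpan ℝ S)) ⊆ (↑) ⁻¹' S := by
      rintro ⟨w, hw⟩ hwi
      have hwV : w ∈ V := by
        rw [← AffineSubspace.mem_coe, hspan] at hw
        exact hw
      exact ⟨hwV, interior_subset hwi⟩
    exact interior_maximal hsub hopen hxQ

/-- for every positive rational `α`,
`relint(α P_{F(I)}) = F(C) ∩ interior(α P_J)`. -/
theorem stmt3 (d : ℕ) (hd : 1 ≤ d) (ℱ : Type) [Fintype ℱ] [Nonempty ℱ]
    (Fσ : ℱ → ((Fin d → ℝ) →ₗ[ℝ] ℝ))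
    (hFint : ∀ σ (v : Fin d → ℤ), ∃ z : ℤ, Fσ σ (castR v) = z)
    (hFsurj : ∀ σ (z : ℤ), ∃ v : Fin d → ℤ, Fσ σ (castR v) = z)
    (hFinj : Function.Injective (Fmap Fσ))
    (hfull : (interior (coneC Fσ)).Nonempty)
    (r : ℕ) (hr : 1 ≤ r) (β : Fin r → (Fin d → ℤ))
    (hβ : ∀ i, castR (β i) ∈ coneC Fσ)
    (hmin : ∀ i j, i ≠ j → castR (β j - β i) ∉ coneC Fσ)
    (α : ℚ) (hα : 0 < α) :
    intrinsicInterior ℝ ((α : ℝ) • newtonPFI Fσ β) =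
      (Fmap Fσ '' coneC Fσ) ∩ interior ((α : ℝ) • newtonPJ Fσ β) := by
  classical
  set F := Fmap Fσ with hF
  set V := LinearMap.range F with hV
  have hFapp : ∀ p σ, F p σ = Fσ σ p := fun p σ => rfl
  have hαpos : (0:ℝ) < (α : ℝ) := by exact_mod_cast hα
  have hα' : (α:ℝ) ≠ 0 := hαpos.ne'
  -- F(C) = V ∩ orthant
  have hFC : F '' coneC Fσ = (V : Set (ℱ → ℝ)) ∩ orthant ℱ := by
    ext x; constructor
    · rintro ⟨p, hp, rfl⟩
      exact ⟨⟨p, rfl⟩, fun σ => hp σ⟩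
    · rintro ⟨⟨p, rfl⟩, hx⟩
      exact ⟨p, fun σ => hx σ, rfl⟩
  -- convexity facts
  have hCconv : Convex ℝ (coneC Fσ) := by
    intro x hx y hy a b ha hb hab σ
    have h1 : Fσ σ (a • x + b • y) = a * Fσ σ x + b * Fσ σ y := by
      simp [map_add, map_smul]
    rw [h1]
    exact add_nonneg (mul_nonneg ha (hx σ)) (mul_nonneg hb (hy σ))
  have hOconv : Convex ℝ (orthant ℱ) := by
    intro x hx y hy a b ha hb hab σ
    exact add_nonneg (mul_nonneg ha (hx σ)) (mul_nonneg hb (hy σ))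
  have hFCconv : Convex ℝ (F '' coneC Fσ) := hCconv.linear_image F
  set aβ : Fin r → (ℱ → ℝ) := fun i => F (castR (β i)) with haβ
  have hPFI : newtonPFI Fσ β = convexHull ℝ (Set.range aβ) + F '' coneC Fσ :=
    convexHull_iUnion_vadd aβ _ hFCconv
  have hPJ : newtonPJ Fσ β = convexHull ℝ (Set.range aβ) + orthant ℱ :=
    convexHull_iUnion_vadd aβ _ hOconv
  have hhullV : convexHull ℝ (Set.range aβ) ⊆ (V : Set (ℱ → ℝ)) := by
    apply convexHull_min _ V.convex
    rintro _ ⟨i, rfl⟩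
    exact ⟨castR (β i), rfl⟩
  have hhullO : convexHull ℝ (Set.range aβ) ⊆ orthant ℱ := by
    apply convexHull_min _ hOconv
    rintro _ ⟨i, rfl⟩ σ
    exact hβ i σ
  -- PFI = V ∩ PJ
  have hEq : newtonPFI Fσ β = (V : Set (ℱ → ℝ)) ∩ newtonPJ Fσ β := by
    rw [hPFI, hPJ, hFC]
    ext x; constructor
    · rintro ⟨c, hc, y, ⟨hyV, hyO⟩, rfl⟩
      exact ⟨V.add_mem (hhullV hc) hyV, c, hc, y, hyO, rfl⟩
    · rintro ⟨hxV, c, hc, y, hyO, rfl⟩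
      have hyV : y ∈ V := by
        have := V.sub_mem hxV (hhullV hc)
        simpa using this
      exact ⟨c, hc, y, ⟨hyV, hyO⟩, rfl⟩
  have hPJorth : newtonPJ Fσ β ⊆ orthant ℱ := by
    rw [hPJ]
    rintro _ ⟨c, hc, y, hyO, rfl⟩ σ
    exact add_nonneg (hhullO hc σ) (hyO σ)
  -- scaling
  have hsmulV : (α:ℝ) • (V : Set (ℱ → ℝ)) = (V : Set (ℱ → ℝ)) := by
    ext x
    rw [Set.mem_smul_set_iff_inv_smul_mem₀ hα']
    constructor
    · intro h
      have := V.smul_mem (α:ℝ) h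
      simpa [smul_smul, mul_inv_cancel₀ hα'] using this
    · intro h
      exact V.smul_mem _ h
  have hsmulEq : (α:ℝ) • newtonPFI Fσ β =
      (V : Set (ℱ → ℝ)) ∩ (α:ℝ) • newtonPJ Fσ β := by
    rw [hEq, Set.smul_set_inter₀ hα', hsmulV]
  -- interior point
  obtain ⟨p, hp⟩ := hfull
  have hppos : ∀ σ, 0 < Fσ σ p := by
    intro σ
    obtain ⟨v, hv⟩ := hFsurj σ 1
    obtain ⟨ε, hε, hball⟩ := Metric.isOpen_iff.1 isOpen_interior p hp
    set q := castR v with hq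
    have hq1 : Fσ σ q = 1 := by exact_mod_cast hv
    set δ := ε / (2 * (‖q‖ + 1)) with hδ
    have hδpos : 0 < δ := by positivity
    have hmem : p - δ • q ∈ coneC Fσ := by
      apply interior_subset
      apply hball
      rw [Metric.mem_ball, dist_eq_norm]
      have h1 : p - δ • q - p = -(δ • q) := by abel
      rw [h1, norm_neg, norm_smul, Real.norm_of_nonneg hδpos.le]
      exact small_mul_lt hε (norm_nonneg _)
    have h2 := hmem σ
    rw [map_sub, map_smul, hq1, smul_eq_mul, mul_one] at h2
    linarith
  set i0 : Fin r := ⟨0, hr⟩ with hi0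
  set x₀ : ℱ → ℝ := (α:ℝ) • (aβ i0 + F p) with hx₀
  have hx₀V : x₀ ∈ V := V.smul_mem _ (V.add_mem ⟨castR (β i0), rfl⟩ ⟨p, rfl⟩)
  have hbase : aβ i0 + F p ∈ interior (newtonPJ Fσ β) := by
    set U : Set (ℱ → ℝ) := {x | ∀ σ, aβ i0 σ < x σ} with hU
    have hUopen : IsOpen U := by
      have h1 : U = ⋂ σ, (fun x : ℱ → ℝ => x σ) ⁻¹' Set.Ioi (aβ i0 σ) := by
        ext x; simp [hU, Set.mem_iInter]
      rw [h1]
      exact isOpen_iInter_of_finite fun σ => isOpen_Ioi.preimage (continuous_apply σ)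
    have hUPJ : U ⊆ newtonPJ Fσ β := by
      intro x hx
      apply subset_convexHull
      refine Set.mem_iUnion.2 ⟨i0, ?_⟩
      refine ⟨x - aβ i0, fun σ => ?_, ?_⟩
      · exact sub_nonneg.2 (hx σ).le
      · simp [vadd_eq_add]
        exact add_sub_cancel _ _
    have hmemU : aβ i0 + F p ∈ U := by
      intro σ
      have := hppos σ
      simp only [Pi.add_apply]
      have h2 : F p σ = Fσ σ p := rfl
      linarith [hppos σ]
    exact interior_maximal hUPJ hUopen hmemU
  have hx₀int : x₀ ∈ interior ((α:ℝ) • newtonPJ Fσ β) := by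
    rw [interior_smul₀ hα']
    exact Set.smul_mem_smul_set hbase
  have hQconv : Convex ℝ ((α:ℝ) • newtonPJ Fσ β) := (convex_convexHull ℝ _).smul _
  rw [hsmulEq, relint_inter_subspace V _ hQconv x₀ hx₀V hx₀int, hFC]
  have hsub : interior ((α:ℝ) • newtonPJ Fσ β) ⊆ orthant ℱ := by
    intro x hx
    obtain ⟨y, hy, rfl⟩ := interior_subset hx
    intro σ
    have := hPJorth hy σ
    simpa using mul_nonneg hαpos.le this
  ext x
  constructor
  · rintro ⟨h1, h2⟩
    exact ⟨⟨h1, hsub h2⟩, h2⟩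
  · rintro ⟨⟨h1, _⟩, h2⟩
    exact ⟨h1, h2⟩
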